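/- arXiv:1901.07020 — 2 statements merged into one kernel-verified Lean document; each statement's English description precedes it below -/
import Mathlib

section
/- Let R = ℤ[F_1,…,F_n, X_1,…,X_n, Y_1,…,Y_n]/I, where I is the ideal generated by the n elements X_i·Y_i − F_i·X_{i+1}^{1−d_i} − F_{i+1}^{1−d_i}·X_{i−1}·X_{i+1}^{d_i} for 1 ≤ i ≤ n (with conventions X_0 = X_{n+1} = F_{n+1} = 1). Then R is spanned, as a module over the image of ℤ[F_1,…,F_n], by the images of the monomials ∏_{i=1}^n X_i^{p_i}·Y_i^{m_i} with p_i·m_i = 0 for all i (i.e. monomials in the X_i and Y_i not involving any product X_i·Y_i). -/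
open Finset

noncomputable section

/-- `i_◇`: for `i ≤ n-2`, the minimal `k ∈ [i,n]` with `ξ k = ξ (k+2)`;
`(n-1)_◇ = n-1` and `n_◇ = n`. -/
def diam (n : ℕ) (ξ : ℕ → ℤ) (i : ℕ) : ℕ :=
  if n - 1 ≤ i then i else sInf {k | i ≤ k ∧ k ≤ n ∧ ξ k = ξ (k + 2)}

/-- `d_m = 1` iff `m = m_◇` (with the convention `d_0 = 1`). -/
def dd (n : ℕ) (ξ : ℕ → ℤ) (m : ℕ) : ℕ :=
  if m = 0 ∨ diam n ξ m = m then 1 else 0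

/-- `j_•`: `1_• = 0`, `2_• = 1` and, for `j > 2`, the largest `m < j` with `m = 1` or `m = m_◇`. -/
def bul (n : ℕ) (ξ : ℕ → ℤ) (j : ℕ) : ℕ :=
  if j ≤ 1 then 0 else sSup {m | m < j ∧ (m = 1 ∨ diam n ξ m = m)}

/-- The polynomial ring `ℤ[F_1,…,F_n, X_1,…,X_n, Y_1,…,Y_n]`. -/
abbrev P7 (n : ℕ) := MvPolynomial (Fin n ⊕ Fin n ⊕ Fin n) ℤ

/-- `F_m` (with `F_{n+1} = 1`). -/
noncomputable def F7 (n : ℕ) (m : ℕ) : P7 n :=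
  if h : 1 ≤ m ∧ m ≤ n then MvPolynomial.X (Sum.inl ⟨m - 1, by omega⟩) else 1

/-- `X_m` (with `X_0 = X_{n+1} = 1`). -/
noncomputable def X7 (n : ℕ) (m : ℕ) : P7 n :=
  if h : 1 ≤ m ∧ m ≤ n then MvPolynomial.X (Sum.inr (Sum.inl ⟨m - 1, by omega⟩)) else 1

/-- `Y_m`. -/
noncomputable def Y7 (n : ℕ) (m : ℕ) : P7 n :=
  if h : 1 ≤ m ∧ m ≤ n then MvPolynomial.X (Sum.inr (Sum.inr ⟨m - 1, by omega⟩)) else 1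

/-- The ideal `I` generated by `X_i Y_i - F_i X_{i+1}^{1-d_i} - F_{i+1}^{1-d_i} X_{i-1} X_{i+1}^{d_i}`. -/
noncomputable def I7 (n : ℕ) (ξ : ℕ → ℤ) : Ideal (P7 n) :=
  Ideal.span {p | ∃ i, 1 ≤ i ∧ i ≤ n ∧
    p = X7 n i * Y7 n i - F7 n i * X7 n (i + 1) ^ (1 - dd n ξ i)
        - F7 n (i + 1) ^ (1 - dd n ξ i) * X7 n (i - 1) * X7 n (i + 1) ^ dd n ξ i}

section Aux

variable (n : ℕ) (ξ : ℕ → ℤ)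

lemma X7_one {j : ℕ} (h : ¬(1 ≤ j ∧ j ≤ n)) : X7 n j = 1 := by
  simp only [X7]; rw [dif_neg h]

lemma Y7_one {j : ℕ} (h : ¬(1 ≤ j ∧ j ≤ n)) : Y7 n j = 1 := by
  simp only [Y7]; rw [dif_neg h]

lemma prod_pow_mul (g : ℕ → P7 n) (hg : ∀ j, ¬(1 ≤ j ∧ j ≤ n) → g j = 1)
    (q : ℕ → ℕ) (j e : ℕ) :
    g j ^ e * ∏ k ∈ Finset.Icc 1 n, g k ^ q k
      = ∏ k ∈ Finset.Icc 1 n, g k ^ (if k = j then q k + e else q k) := by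
  by_cases hj : 1 ≤ j ∧ j ≤ n
  · have hjm : j ∈ Finset.Icc 1 n := Finset.mem_Icc.mpr hj
    rw [← Finset.mul_prod_erase _ (fun k => g k ^ q k) hjm,
        ← Finset.mul_prod_erase _ (fun k => g k ^ (if k = j then q k + e else q k)) hjm]
    have h1 : ∀ k ∈ (Finset.Icc 1 n).erase j,
        g k ^ (if k = j then q k + e else q k) = g k ^ q k := by
      intro k hk
      rw [if_neg (Finset.ne_of_mem_erase hk)]
    rw [Finset.prod_congr rfl h1, if_pos rfl, pow_add]
    ring
  · rw [hg j hj, one_pow, one_mul]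
    apply Finset.prod_congr rfl
    intro k hk
    have hk' := Finset.mem_Icc.mp hk
    rw [if_neg (by omega)]

/-- The subalgebra generated by the `F_i`. -/
noncomputable abbrev AA : Subalgebra ℤ (P7 n ⧸ I7 n ξ) :=
  Algebra.adjoin ℤ
    {r : P7 n ⧸ I7 n ξ | ∃ i, 1 ≤ i ∧ i ≤ n ∧ r = Ideal.Quotient.mk (I7 n ξ) (F7 n i)}

/-- The span of the disjoint monomials. -/
noncomputable abbrev MM : Submodule (AA n ξ) (P7 n ⧸ I7 n ξ) :=
  Submodule.span (AA n ξ)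
    {r : P7 n ⧸ I7 n ξ | ∃ p m : ℕ → ℕ, (∀ i, p i * m i = 0) ∧
      r = Ideal.Quotient.mk (I7 n ξ)
        (∏ i ∈ Finset.Icc 1 n, X7 n i ^ p i * Y7 n i ^ m i)}

lemma memA {i : ℕ} (h1 : 1 ≤ i) (h2 : i ≤ n) :
    Ideal.Quotient.mk (I7 n ξ) (F7 n i) ∈ AA n ξ :=
  Algebra.subset_adjoin ⟨i, h1, h2, rfl⟩

lemma mulF_mem (f : P7 n) (hf : Ideal.Quotient.mk (I7 n ξ) f ∈ AA n ξ)
    {x : P7 n ⧸ I7 n ξ} (hx : x ∈ MM n ξ) :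
    Ideal.Quotient.mk (I7 n ξ) f * x ∈ MM n ξ :=
  Submodule.smul_mem (MM n ξ) ⟨Ideal.Quotient.mk (I7 n ξ) f, hf⟩ hx

lemma rel {i : ℕ} (h1 : 1 ≤ i) (h2 : i ≤ n) :
    Ideal.Quotient.mk (I7 n ξ) (X7 n i * Y7 n i)
      = Ideal.Quotient.mk (I7 n ξ) (F7 n i * X7 n (i + 1) ^ (1 - dd n ξ i))
        + Ideal.Quotient.mk (I7 n ξ)
            (F7 n (i + 1) ^ (1 - dd n ξ i) * X7 n (i - 1) * X7 n (i + 1) ^ dd n ξ i) := by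
  have hmem : (X7 n i * Y7 n i - F7 n i * X7 n (i + 1) ^ (1 - dd n ξ i)
      - F7 n (i + 1) ^ (1 - dd n ξ i) * X7 n (i - 1) * X7 n (i + 1) ^ dd n ξ i) ∈ I7 n ξ :=
    Ideal.subset_span ⟨i, h1, h2, rfl⟩
  have h := Ideal.Quotient.eq_zero_iff_mem.mpr hmem
  rw [map_sub, map_sub, sub_sub, sub_eq_zero] at h
  exact h

lemma mem_of_disj (p m : ℕ → ℕ) (h : ∀ i ∈ Finset.Icc 1 n, p i * m i = 0) :
    Ideal.Quotient.mk (I7 n ξ)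
      ((∏ k ∈ Finset.Icc 1 n, X7 n k ^ p k) * ∏ k ∈ Finset.Icc 1 n, Y7 n k ^ m k)
      ∈ MM n ξ := by
  apply Submodule.subset_span
  refine ⟨fun i => if 1 ≤ i ∧ i ≤ n then p i else 0,
          fun i => if 1 ≤ i ∧ i ≤ n then m i else 0, ?_, ?_⟩
  · intro i
    by_cases hi : 1 ≤ i ∧ i ≤ n
    · simp only [if_pos hi]; exact h i (Finset.mem_Icc.mpr hi)
    · simp [hi]
  · congr 1
    rw [Finset.prod_mul_distrib]
    congr 1 <;>
    · apply Finset.prod_congr rfl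
      intro k hk
      have hk' := Finset.mem_Icc.mp hk
      simp [hk'.1, hk'.2]

lemma key : ∀ (N : ℕ) (p m : ℕ → ℕ), (∑ k ∈ Finset.Icc 1 n, m k) ≤ N →
    Ideal.Quotient.mk (I7 n ξ)
      ((∏ k ∈ Finset.Icc 1 n, X7 n k ^ p k) * ∏ k ∈ Finset.Icc 1 n, Y7 n k ^ m k)
      ∈ MM n ξ := by
  intro N
  induction N with
  | zero =>
    intro p m h
    apply mem_of_disj
    intro i hi
    have h0 : ∑ k ∈ Finset.Icc 1 n, m k = 0 := Nat.le_zero.mp h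
    have := (Finset.sum_eq_zero_iff.mp h0) i hi
    simp [this]
  | succ N ih =>
    intro p m hsum
    by_cases hdisj : ∀ i ∈ Finset.Icc 1 n, p i * m i = 0
    · exact mem_of_disj n ξ p m hdisj
    push_neg at hdisj
    obtain ⟨i, hiIcc, hipm⟩ := hdisj
    obtain ⟨hi1, hi2⟩ := Finset.mem_Icc.mp hiIcc
    rw [Nat.mul_ne_zero_iff] at hipm
    have hpi : 1 ≤ p i := Nat.pos_of_ne_zero hipm.1
    have hmi : 1 ≤ m i := Nat.pos_of_ne_zero hipm.2
    set p₁ : ℕ → ℕ := fun k => if k = i then p k - 1 else p k with hp₁def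
    set m₁ : ℕ → ℕ := fun k => if k = i then m k - 1 else m k with hm₁def
    have hXsplit : (∏ k ∈ Finset.Icc 1 n, X7 n k ^ p k)
        = X7 n i * ∏ k ∈ Finset.Icc 1 n, X7 n k ^ p₁ k := by
      have h := prod_pow_mul n (X7 n) (fun j hj => X7_one n hj) p₁ i 1
      rw [pow_one] at h
      rw [h]
      apply Finset.prod_congr rfl
      intro k _
      congr 1
      by_cases hk : k = i
      · subst hk
        simp only [hp₁def, if_pos rfl, if_true]
        omega
      · simp only [hp₁def, if_neg hk]
    have hYsplit : (∏ k ∈ Finset.Icc 1 n, Y7 n k ^ m k)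
        = Y7 n i * ∏ k ∈ Finset.Icc 1 n, Y7 n k ^ m₁ k := by
      have h := prod_pow_mul n (Y7 n) (fun j hj => Y7_one n hj) m₁ i 1
      rw [pow_one] at h
      rw [h]
      apply Finset.prod_congr rfl
      intro k _
      congr 1
      by_cases hk : k = i
      · subst hk
        simp only [hm₁def, if_pos rfl, if_true]
        omega
      · simp only [hm₁def, if_neg hk]
    have hsum' : (∑ k ∈ Finset.Icc 1 n, m₁ k) ≤ N := by
      have e1 : ∑ k ∈ Finset.Icc 1 n, m k
          = m i + ∑ k ∈ (Finset.Icc 1 n).erase i, m k :=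
        (Finset.add_sum_erase _ m hiIcc).symm
      have e2 : ∑ k ∈ Finset.Icc 1 n, m₁ k
          = m₁ i + ∑ k ∈ (Finset.Icc 1 n).erase i, m₁ k :=
        (Finset.add_sum_erase _ m₁ hiIcc).symm
      have e3 : ∑ k ∈ (Finset.Icc 1 n).erase i, m₁ k
          = ∑ k ∈ (Finset.Icc 1 n).erase i, m k := by
        apply Finset.sum_congr rfl
        intro k hk
        simp only [hm₁def]
        rw [if_neg (Finset.ne_of_mem_erase hk)]
      have e4 : m₁ i = m i - 1 := by simp [hm₁def]
      omega
    have gen : ∀ q : ℕ → ℕ,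
        Ideal.Quotient.mk (I7 n ξ)
          ((∏ k ∈ Finset.Icc 1 n, X7 n k ^ q k) * ∏ k ∈ Finset.Icc 1 n, Y7 n k ^ m₁ k)
          ∈ MM n ξ := fun q => ih q m₁ hsum'
    have hmain : (∏ k ∈ Finset.Icc 1 n, X7 n k ^ p k) * (∏ k ∈ Finset.Icc 1 n, Y7 n k ^ m k)
        = (X7 n i * Y7 n i) * ((∏ k ∈ Finset.Icc 1 n, X7 n k ^ p₁ k)
            * ∏ k ∈ Finset.Icc 1 n, Y7 n k ^ m₁ k) := by
      rw [hXsplit, hYsplit]; ring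
    rw [hmain, map_mul, rel n ξ hi1 hi2, add_mul]
    apply add_mem
    · rw [← map_mul]
      have heq : F7 n i * X7 n (i + 1) ^ (1 - dd n ξ i)
            * ((∏ k ∈ Finset.Icc 1 n, X7 n k ^ p₁ k) * ∏ k ∈ Finset.Icc 1 n, Y7 n k ^ m₁ k)
          = F7 n i * ((X7 n (i + 1) ^ (1 - dd n ξ i) * ∏ k ∈ Finset.Icc 1 n, X7 n k ^ p₁ k)
              * ∏ k ∈ Finset.Icc 1 n, Y7 n k ^ m₁ k) := by ring
      rw [heq, map_mul]
      apply mulF_mem n ξ _ (memA n ξ hi1 hi2)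
      rw [prod_pow_mul n (X7 n) (fun j hj => X7_one n hj) p₁ (i + 1) (1 - dd n ξ i)]
      exact gen _
    · rw [← map_mul]
      have heq : F7 n (i + 1) ^ (1 - dd n ξ i) * X7 n (i - 1) * X7 n (i + 1) ^ dd n ξ i
            * ((∏ k ∈ Finset.Icc 1 n, X7 n k ^ p₁ k) * ∏ k ∈ Finset.Icc 1 n, Y7 n k ^ m₁ k)
          = F7 n (i + 1) ^ (1 - dd n ξ i)
            * ((X7 n (i - 1) ^ 1 * (X7 n (i + 1) ^ dd n ξ i * ∏ k ∈ Finset.Icc 1 n, X7 n k ^ p₁ k))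
              * ∏ k ∈ Finset.Icc 1 n, Y7 n k ^ m₁ k) := by ring
      rw [heq, map_mul]
      have hF : Ideal.Quotient.mk (I7 n ξ) (F7 n (i + 1) ^ (1 - dd n ξ i)) ∈ AA n ξ := by
        by_cases hle : i + 1 ≤ n
        · rw [map_pow]
          exact pow_mem (memA n ξ (by omega) hle) _
        · have hF1 : F7 n (i + 1) = 1 := by
            simp only [F7]; rw [dif_neg (by omega)]
          rw [hF1, one_pow, map_one]
          exact one_mem _
      apply mulF_mem n ξ _ hF
      rw [prod_pow_mul n (X7 n) (fun j hj => X7_one n hj) p₁ (i + 1) (dd n ξ i)]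
      have gen2 : ∀ q : ℕ → ℕ,
          Ideal.Quotient.mk (I7 n ξ)
            ((X7 n (i - 1) ^ 1 * ∏ k ∈ Finset.Icc 1 n, X7 n k ^ q k)
              * ∏ k ∈ Finset.Icc 1 n, Y7 n k ^ m₁ k) ∈ MM n ξ := by
        intro q
        rw [prod_pow_mul n (X7 n) (fun j hj => X7_one n hj) q (i - 1) 1]
        exact gen _
      exact gen2 _

lemma key' (p m : ℕ → ℕ) :
    Ideal.Quotient.mk (I7 n ξ)
      ((∏ k ∈ Finset.Icc 1 n, X7 n k ^ p k) * ∏ k ∈ Finset.Icc 1 n, Y7 n k ^ m k)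
      ∈ MM n ξ :=
  key n ξ _ p m le_rfl

lemma mul_mem_M (g : P7 n)
    (hg : ∀ p m : ℕ → ℕ,
      Ideal.Quotient.mk (I7 n ξ)
        (g * ((∏ k ∈ Finset.Icc 1 n, X7 n k ^ p k) * ∏ k ∈ Finset.Icc 1 n, Y7 n k ^ m k))
        ∈ MM n ξ) :
    ∀ x ∈ MM n ξ, Ideal.Quotient.mk (I7 n ξ) g * x ∈ MM n ξ := by
  intro x hx
  refine Submodule.span_induction ?_ ?_ ?_ ?_ hx
  · rintro r ⟨p, m, hpm, rfl⟩
    have h2 : g * ((∏ k ∈ Finset.Icc 1 n, X7 n k ^ p k) * ∏ k ∈ Finset.Icc 1 n, Y7 n k ^ m k)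
        = g * ∏ k ∈ Finset.Icc 1 n, X7 n k ^ p k * Y7 n k ^ m k := by
      rw [Finset.prod_mul_distrib]
    have h3 := hg p m
    rw [h2, map_mul] at h3
    exact h3
  · rw [mul_zero]; exact zero_mem _
  · intro a b _ _ ha hb
    rw [mul_add]; exact add_mem ha hb
  · intro a y _ hy
    rw [mul_smul_comm]
    exact Submodule.smul_mem _ _ hy

end Aux


theorem stmt7 (n : ℕ) (ξ : ℕ → ℤ) (hn : 2 ≤ n)
    (hheight : ∀ k, 2 ≤ k → k ≤ n → |ξ k - ξ (k - 1)| = 1)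
    (hlo : ξ 0 = ξ 2) (hhi : ξ (n + 1) = ξ (n - 1)) :
    Submodule.span (Algebra.adjoin ℤ
        {r : P7 n ⧸ I7 n ξ | ∃ i, 1 ≤ i ∧ i ≤ n ∧ r = Ideal.Quotient.mk (I7 n ξ) (F7 n i)})
      {r : P7 n ⧸ I7 n ξ | ∃ p m : ℕ → ℕ, (∀ i, p i * m i = 0) ∧
        r = Ideal.Quotient.mk (I7 n ξ)
          (∏ i ∈ Finset.Icc 1 n, X7 n i ^ p i * Y7 n i ^ m i)} = ⊤ := by
  show MM n ξ = ⊤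
  rw [eq_top_iff]
  rintro x -
  obtain ⟨f, rfl⟩ := Ideal.Quotient.mk_surjective x
  induction f using MvPolynomial.induction_on with
  | C a =>
    have h1 := key' n ξ (fun _ => 0) (fun _ => 0)
    have h2 : Ideal.Quotient.mk (I7 n ξ) (1 : P7 n) ∈ MM n ξ := by simpa using h1
    have hca : Ideal.Quotient.mk (I7 n ξ) (MvPolynomial.C a : P7 n)
        = algebraMap ℤ (P7 n ⧸ I7 n ξ) a := by
      rw [show (MvPolynomial.C a : P7 n) = ((a : ℤ) : P7 n) by simp, map_intCast]
      simp
    have h3 : Ideal.Quotient.mk (I7 n ξ) (MvPolynomial.C a : P7 n) ∈ AA n ξ := by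
      rw [hca]; exact Subalgebra.algebraMap_mem _ a
    have h4 : Ideal.Quotient.mk (I7 n ξ) (MvPolynomial.C a : P7 n)
        = Ideal.Quotient.mk (I7 n ξ) (MvPolynomial.C a : P7 n)
          * Ideal.Quotient.mk (I7 n ξ) (1 : P7 n) := by rw [map_one, mul_one]
    rw [h4]
    exact mulF_mem n ξ _ h3 h2
  | add f g hf hg =>
    rw [map_add]; exact add_mem hf hg
  | mul_X f v hf =>
    rw [map_mul, mul_comm]
    refine mul_mem_M n ξ (MvPolynomial.X v) ?_ _ hf
    intro p m
    rcases v with j | j | j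
    · have hj := j.isLt
      have hv : (MvPolynomial.X (Sum.inl j) : P7 n) = F7 n (j.1 + 1) := by
        simp only [F7]
        rw [dif_pos ⟨by omega, by omega⟩]
        have hfin : (⟨j.1 + 1 - 1, by omega⟩ : Fin n) = j := by ext; simp
        rw [hfin]
      rw [hv, map_mul]
      exact mulF_mem n ξ _ (memA n ξ (by omega) (by omega)) (key' n ξ p m)
    · have hj := j.isLt
      have hv : (MvPolynomial.X (Sum.inr (Sum.inl j)) : P7 n) = X7 n (j.1 + 1) := by
        simp only [X7]
        rw [dif_pos ⟨by omega, by omega⟩]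
        have hfin : (⟨j.1 + 1 - 1, by omega⟩ : Fin n) = j := by ext; simp
        rw [hfin]
      have heq : X7 n (j.1 + 1) * ((∏ k ∈ Finset.Icc 1 n, X7 n k ^ p k)
            * ∏ k ∈ Finset.Icc 1 n, Y7 n k ^ m k)
          = (X7 n (j.1 + 1) ^ 1 * ∏ k ∈ Finset.Icc 1 n, X7 n k ^ p k)
            * ∏ k ∈ Finset.Icc 1 n, Y7 n k ^ m k := by ring
      rw [hv, heq, prod_pow_mul n (X7 n) (fun j hj => X7_one n hj) p (j.1 + 1) 1]
      exact key' n ξ _ _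
    · have hj := j.isLt
      have hv : (MvPolynomial.X (Sum.inr (Sum.inr j)) : P7 n) = Y7 n (j.1 + 1) := by
        simp only [Y7]
        rw [dif_pos ⟨by omega, by omega⟩]
        have hfin : (⟨j.1 + 1 - 1, by omega⟩ : Fin n) = j := by ext; simp
        rw [hfin]
      have heq : Y7 n (j.1 + 1) * ((∏ k ∈ Finset.Icc 1 n, X7 n k ^ p k)
            * ∏ k ∈ Finset.Icc 1 n, Y7 n k ^ m k)
          = (∏ k ∈ Finset.Icc 1 n, X7 n k ^ p k)
            * (Y7 n (j.1 + 1) ^ 1 * ∏ k ∈ Finset.Icc 1 n, Y7 n k ^ m k) := by ring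
      rw [hv, heq, prod_pow_mul n (Y7 n) (fun j hj => Y7_one n hj) m (j.1 + 1) 1]
      exact key' n ξ _ _
end
end

section
/- Let (r, p, m) and (r′, p′, m′) be triples in ℕ^n × ℕ^n × ℕ^n with p_i·m_i = 0 and p′_i·m′_i = 0 for all 1 ≤ i ≤ n. Then W(r, p, m) = W(r′, p′, m′) in P^+_ξ if and only if (r, p, m) = (r′, p′, m′). -/
open Finset

noncomputable section

/-- The generator `ω_{i,a}` of the free abelian monoid `𝒫⁺_ξ`, realized inside the free
abelian monoid `Multiset (ℕ × ℤ)` on all pairs `(i, a)`. -/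
def om (i : ℕ) (a : ℤ) : Multiset (ℕ × ℤ) := {(i, a)}

/-- The element `W(r,p,m) = ∏_i f_i^{r_i} ω_{i,ξ(i+1)}^{p_i}
(ω_{i,ξ(i+1)+2}^{δ} ω_{i,ξ(i+1)-2}^{δ'} ω_{i+1,ξ(i+2)}^{1-d_i})^{m_i}` of `𝒫⁺_ξ`,
where `f_i = ω_{i,ξ(i)+1} ω_{i,ξ(i)-1}` (written additively). -/
def W8 (n : ℕ) (ξ : ℕ → ℤ) (r p m : ℕ → ℕ) : Multiset (ℕ × ℤ) :=
  ∑ i ∈ Finset.Icc 1 n,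
    (r i • (om i (ξ i + 1) + om i (ξ i - 1)) + p i • om i (ξ (i + 1))
      + m i • ((if ξ i = ξ (i + 1) + 1 then om i (ξ (i + 1) + 2) else 0)
          + (if ξ i = ξ (i + 1) - 1 then om i (ξ (i + 1) - 2) else 0)
          + (1 - dd n ξ i) • om (i + 1) (ξ (i + 2))))

lemma sum_two_ind (n j : ℕ) (C : ℕ) (G : ℕ → ℕ) (hj : j ∈ Icc 1 n) :
    ∑ i ∈ Icc 1 n, ((if i = j then C else 0) + (if i = j - 1 then G i else 0))
      = C + (if j - 1 ∈ Icc 1 n then G (j - 1) else 0) := by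
  rw [Finset.sum_add_distrib, Finset.sum_ite_eq' (Icc 1 n) j (fun _ => C),
    Finset.sum_ite_eq' (Icc 1 n) (j-1) G, if_pos hj]

set_option maxHeartbeats 1600000 in
lemma count_W8 (n : ℕ) (ξ : ℕ → ℤ) (r p m : ℕ → ℕ) (hm0 : m 0 = 0)
    (j : ℕ) (hj1 : 1 ≤ j) (hjn : j ≤ n) (b : ℤ) :
    Multiset.count (j, b) (W8 n ξ r p m) =
      ((if b = ξ j + 1 then r j else 0) + (if b = ξ j - 1 then r j else 0)
        + (if b = ξ (j+1) then p j else 0)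
        + m j * ((if ξ j = ξ (j+1) + 1 ∧ b = ξ (j+1) + 2 then 1 else 0)
               + (if ξ j = ξ (j+1) - 1 ∧ b = ξ (j+1) - 2 then 1 else 0)))
      + (if b = ξ (j+1) then (1 - dd n ξ (j-1)) * m (j-1) else 0) := by
  rw [W8, Multiset.count_sum']
  have key : ∀ i ∈ Icc 1 n,
      Multiset.count (j, b) (r i • (om i (ξ i + 1) + om i (ξ i - 1)) + p i • om i (ξ (i + 1))
        + m i • ((if ξ i = ξ (i + 1) + 1 then om i (ξ (i + 1) + 2) else 0)
            + (if ξ i = ξ (i + 1) - 1 then om i (ξ (i + 1) - 2) else 0)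
            + (1 - dd n ξ i) • om (i + 1) (ξ (i + 2)))) =
      (if i = j then
        ((if b = ξ j + 1 then r j else 0) + (if b = ξ j - 1 then r j else 0)
        + (if b = ξ (j+1) then p j else 0)
        + m j * ((if ξ j = ξ (j+1) + 1 ∧ b = ξ (j+1) + 2 then 1 else 0)
               + (if ξ j = ξ (j+1) - 1 ∧ b = ξ (j+1) - 2 then 1 else 0))) else 0)
      + (if i = j - 1 then (if b = ξ (i + 2) then (1 - dd n ξ i) * m i else 0) else 0) := by
    intro i hi
    simp only [mem_Icc] at hi
    obtain ⟨hi1, hin⟩ := hi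
    simp only [Multiset.count_add, Multiset.count_nsmul, om, Multiset.count_singleton,
      apply_ite (Multiset.count (j, b)), Multiset.count_zero, Prod.mk.injEq]
    by_cases hij : i = j
    · subst hij
      simp only [if_pos rfl, if_neg (show ¬ i = i - 1 by omega), eq_self_iff_true, true_and,
        if_neg (show ¬ (i = i + 1 ∧ b = ξ (i+2)) by omega), mul_zero, add_zero]
      split_ifs <;> first | omega | ring
    · by_cases hij2 : i = j - 1
      · simp only [if_neg hij, if_pos hij2, if_neg (show ¬ j = i by omega),
          false_and, mul_zero, zero_add, zero_mul, add_zero, if_false]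
        have hji : j = i + 1 := by omega
        subst hji
        simp only [eq_self_iff_true, true_and]
        split_ifs <;> first | omega | ring
      · simp only [if_neg hij, if_neg hij2, if_neg (show ¬ j = i by omega),
          if_neg (show ¬ (j = i + 1 ∧ b = ξ (i+2)) by omega), false_and, if_false,
          mul_zero, add_zero, zero_add]
        split_ifs <;> omega
  rw [Finset.sum_congr rfl key,
    sum_two_ind n j _ (fun i => if b = ξ (i + 2) then (1 - dd n ξ i) * m i else 0)
      (by simp only [mem_Icc]; omega)]
  congr 1
  by_cases hj2 : 2 ≤ j
  · rw [if_pos (by simp only [mem_Icc]; omega), show j - 1 + 2 = j + 1 by omega]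
  · have hj : j = 1 := by omega
    subst hj
    rw [if_neg (by simp)]
    simp [hm0]
lemma count_W8_B (n : ℕ) (ξ : ℕ → ℤ) (r p m : ℕ → ℕ) (hm0 : m 0 = 0)
    (j : ℕ) (hj1 : 1 ≤ j) (hjn : j ≤ n)
    (hε : ξ (j+1) = ξ j + 1 ∨ ξ (j+1) = ξ j - 1) :
    Multiset.count (j, ξ (j+1)) (W8 n ξ r p m)
      = r j + p j + (1 - dd n ξ (j-1)) * m (j-1) := by
  rw [count_W8 n ξ r p m hm0 j hj1 hjn]
  generalize (1 - dd n ξ (j-1)) * m (j-1) = c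
  rcases hε with h | h <;> split_ifs <;> omega

lemma count_W8_A (n : ℕ) (ξ : ℕ → ℤ) (r p m : ℕ → ℕ) (hm0 : m 0 = 0)
    (j : ℕ) (hj1 : 1 ≤ j) (hjn : j ≤ n)
    (hε : ξ (j+1) = ξ j + 1 ∨ ξ (j+1) = ξ j - 1) :
    Multiset.count (j, 2 * ξ j - ξ (j+1)) (W8 n ξ r p m) = r j + m j := by
  rw [count_W8 n ξ r p m hm0 j hj1 hjn]
  generalize (1 - dd n ξ (j-1)) * m (j-1) = c
  rcases hε with h | h <;> split_ifs <;> omega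

theorem stmt8 (n : ℕ) (ξ : ℕ → ℤ) (hn : 2 ≤ n)
    (hheight : ∀ k, 2 ≤ k → k ≤ n → |ξ k - ξ (k - 1)| = 1)
    (hlo : ξ 0 = ξ 2) (hhi : ξ (n + 1) = ξ (n - 1))
    (r p m r' p' m' : ℕ → ℕ)
    (hr : ∀ i, i = 0 ∨ n < i → r i = 0) (hp : ∀ i, i = 0 ∨ n < i → p i = 0)
    (hm : ∀ i, i = 0 ∨ n < i → m i = 0)
    (hr' : ∀ i, i = 0 ∨ n < i → r' i = 0) (hp' : ∀ i, i = 0 ∨ n < i → p' i = 0)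
    (hm' : ∀ i, i = 0 ∨ n < i → m' i = 0)
    (hstd : ∀ i, p i * m i = 0) (hstd' : ∀ i, p' i * m' i = 0) :
    W8 n ξ r p m = W8 n ξ r' p' m' ↔ (r = r' ∧ p = p' ∧ m = m') := by
  constructor
  · intro hW
    have hm0 : m 0 = 0 := hm 0 (Or.inl rfl)
    have hm0' : m' 0 = 0 := hm' 0 (Or.inl rfl)
    have hε : ∀ j, 1 ≤ j → j ≤ n → ξ (j+1) = ξ j + 1 ∨ ξ (j+1) = ξ j - 1 := by
      intro j h1 h2
      by_cases hj : j = n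
      · rw [hj]
        have h := (abs_eq (by norm_num : (0:ℤ) ≤ 1)).mp (hheight n hn le_rfl)
        rcases h with h | h
        · right; omega
        · left; omega
      · have h := hheight (j+1) (by omega) (by omega)
        rw [Nat.add_sub_cancel] at h
        rcases (abs_eq (by norm_num : (0:ℤ) ≤ 1)).mp h with h | h
        · left; omega
        · right; omega
    have main : ∀ j, r j = r' j ∧ p j = p' j ∧ m j = m' j := by
      intro j
      induction j using Nat.strong_induction_on with
      | _ j ih =>
        by_cases hjr : 1 ≤ j ∧ j ≤ n
        · obtain ⟨hj1, hjn⟩ := hjr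
          have hmprev : m (j-1) = m' (j-1) := by
            rcases Nat.eq_or_lt_of_le hj1 with h | h
            · rw [show j - 1 = 0 by omega, hm0, hm0']
            · exact (ih (j-1) (by omega)).2.2
          have hB := congrArg (Multiset.count (j, ξ (j+1))) hW
          rw [count_W8_B n ξ r p m hm0 j hj1 hjn (hε j hj1 hjn),
            count_W8_B n ξ r' p' m' hm0' j hj1 hjn (hε j hj1 hjn), hmprev] at hB
          have hB' : r j + p j = r' j + p' j := Nat.add_right_cancel hB
          have hA := congrArg (Multiset.count (j, 2 * ξ j - ξ (j+1))) hW
          rw [count_W8_A n ξ r p m hm0 j hj1 hjn (hε j hj1 hjn),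
            count_W8_A n ξ r' p' m' hm0' j hj1 hjn (hε j hj1 hjn)] at hA
          have h1 := Nat.mul_eq_zero.mp (hstd j)
          have h2 := Nat.mul_eq_zero.mp (hstd' j)
          refine ⟨by omega, by omega, by omega⟩
        · have hj : j = 0 ∨ n < j := by omega
          exact ⟨by rw [hr j hj, hr' j hj], by rw [hp j hj, hp' j hj],
            by rw [hm j hj, hm' j hj]⟩
    exact ⟨funext fun j => (main j).1, funext fun j => (main j).2.1,
      funext fun j => (main j).2.2⟩
  · rintro ⟨rfl, rfl, rfl⟩
    rfl
end
end
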